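/- The bijection λ between the global active domains of two b-bounded extended runs with equal abstraction also intertwines the sequence numberings: the induced map β defined by β(seq_no_i(e)) = seq_no'_i(λ(e)) is well-defined, bijective between the ranges of the two numberings, and strictly monotone. -/
import Mathlib


universe u v w

/-- A relational schema: a collection of relation names with arities. -/
structure Schema (Rel : Type u) where
  ar : Rel → ℕ

/-- A fact over a schema `S` and a carrier `C`: a relation name together with a
tuple of the correct arity. -/
abbrev DBFact {Rel : Type u} (S : Schema Rel) (C : Type w) := Σ R : Rel, Fin (S.ar R) → C

/-- A database instance over schema `S` and carrier `C`: a set of facts. -/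
abbrev DBInst {Rel : Type u} (S : Schema Rel) (C : Type w) := Set (DBFact S C)

/-- The active domain of a database instance. -/
def adom {Rel : Type u} {Δ : Type w} (S : Schema Rel) (I : DBInst S Δ) : Set Δ :=
  {e | ∃ fa ∈ I, ∃ i, fa.2 i = e}

/-- Substituting a substitution `σ` in a database instance over variables. -/
def substDB {Rel : Type u} {Var : Type v} {Δ : Type w} (S : Schema Rel)
    (σ : Var → Δ) (J : DBInst S Var) : DBInst S Δ :=
  (fun fa : DBFact S Var => (⟨fa.1, fun i => σ (fa.2 i)⟩ : DBFact S Δ)) '' J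

/-- A (guarded) DMS action: action parameters `ū`, fresh-input variables `v̄`
(listed in order), a guard (given semantically, as the satisfaction relation of
an `FOL(R)` query on an instance under a substitution), and variable-instances
`Del` and `Add`. -/
structure DMSAction {Rel : Type u} (S : Schema Rel) (Var : Type v) (Δ : Type w) where
  params : Set Var
  fresh : List Var
  guard : DBInst S Δ → (Var → Δ) → Prop
  Del : DBInst S Var
  Add : DBInst S Var

/-- The set of fresh-input variables of an action. -/
def freshSet {Rel : Type u} {Var : Type v} {Δ : Type w} {S : Schema Rel}
    (α : DMSAction S Var Δ) : Set Var := {v | v ∈ α.fresh}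

/-- Well-formedness: every variable occurring in `Add` is an action parameter or
a fresh-input variable. -/
def AddVarsOK {Rel : Type u} {Var : Type v} {Δ : Type w} {S : Schema Rel}
    (α : DMSAction S Var Δ) : Prop :=
  ∀ fa ∈ α.Add, ∀ k, fa.2 k ∈ α.params ∪ freshSet α

/-- Well-formedness: every fresh-input variable occurs in some fact of `Add`
(`v̄ ⊆ adom(Add)`). -/
def FreshInAdd {Rel : Type u} {Var : Type v} {Δ : Type w} {S : Schema Rel}
    (α : DMSAction S Var Δ) : Prop :=
  ∀ v ∈ α.fresh, ∃ fa ∈ α.Add, ∃ k, fa.2 k = v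

/-- The DMS transition relation `⟨I,H⟩ →^{α:σ} ⟨I',H'⟩`: `σ` is an instantiating
substitution for `α` at `⟨I,H⟩` (parameters into the active domain, fresh-input
variables injectively to history-fresh values, guard satisfied),
`I' = (I − σ(Del)) + σ(Add)` and `H' = H ∪ σ(v̄)`. -/
def Step {Rel : Type u} {Var : Type v} {Δ : Type w} (S : Schema Rel)
    (α : DMSAction S Var Δ) (σ : Var → Δ)
    (I : DBInst S Δ) (H : Set Δ) (I' : DBInst S Δ) (H' : Set Δ) : Prop :=
  (∀ u ∈ α.params, σ u ∈ adom S I) ∧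
  (∀ v ∈ α.fresh, σ v ∉ H) ∧
  Set.InjOn σ (freshSet α) ∧
  α.guard I σ ∧
  I' = (I \ substDB S σ α.Del) ∪ substDB S σ α.Add ∧
  H' = H ∪ σ '' freshSet α

/-- The elements of `D` that are more recent than `e` according to the sequence
numbering `sn`. -/
def recAbove {Δ : Type w} (D : Set Δ) (sn : Δ → ℕ) (e : Δ) : Set Δ :=
  {e' ∈ D | sn e < sn e'}

/-- The recency index of `e` in `D` wrt. `sn`: the number of elements of `D`
with strictly larger sequence number. -/
noncomputable def recIdx {Δ : Type w} (D : Set Δ) (sn : Δ → ℕ) (e : Δ) : ℕ :=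
  (recAbove D sn e).ncard

/-- The `b`-recent part of `D` wrt. `sn`: the elements of `D` above which fewer
than `b` elements of `D` sit (i.e. the `min(b,|D|)` most recent elements). -/
def bRecent {Δ : Type w} (D : Set Δ) (sn : Δ → ℕ) (b : ℕ) : Set Δ :=
  {e ∈ D | (recAbove D sn e).Finite ∧ (recAbove D sn e).ncard < b}

/-- The `b`-bounded transition relation on extended configurations
`⟨I, H, seq_no⟩`: an ordinary transition in which all action-parameter values
lie among the `b` most recent elements of `adom I`, and where the sequence
numbering is injectively extended so that fresh elements get numbers larger
than everything in the history, ordered by their appearance among the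
fresh-input variables. -/
def BStep {Rel : Type u} {Var : Type v} {Δ : Type w} (S : Schema Rel) (b : ℕ)
    (α : DMSAction S Var Δ) (σ : Var → Δ)
    (I : DBInst S Δ) (H : Set Δ) (sn : Δ → ℕ)
    (I' : DBInst S Δ) (H' : Set Δ) (sn' : Δ → ℕ) : Prop :=
  Step S α σ I H I' H' ∧
  (∀ u ∈ α.params, σ u ∈ bRecent (adom S I) sn b) ∧
  Set.InjOn sn' H' ∧
  (∀ e ∈ H, sn' e = sn e) ∧
  (∀ v ∈ α.fresh, ∀ e ∈ H, sn e < sn' (σ v)) ∧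
  (∀ i j : Fin α.fresh.length, i < j →
    sn' (σ (α.fresh.get i)) < sn' (σ (α.fresh.get j)))

/-- A database-manipulating system: an initial instance and a set of actions. -/
structure DMS {Rel : Type u} (S : Schema Rel) (Var : Type v) (Δ : Type w) where
  I0 : DBInst S Δ
  acts : Set (DMSAction S Var Δ)

/-- The bijection `lam` between the global active domains of two `b`-bounded
extended runs with equal abstraction (which sends the element introduced by a
fresh variable `v` at step `i` of the first run to the element introduced by
`v` at step `i` of the second run) also intertwines the sequence numberings:
the map `β` determined by `β (seq_no_i e) = seq_no'_i (lam e)` is well-defined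
(i.e. extends to a total function satisfying these equations), bijective
between the ranges of the two numberings, and strictly monotone there. -/
theorem seq_numbering_intertwined {Rel : Type u} {Var : Type v} {Δ : Type w}
    {S : Schema Rel} (M : DMS S Var Δ) (b : ℕ)
    (hM : adom S M.I0 = ∅)
    (I I' : ℕ → DBInst S Δ) (H H' : ℕ → Set Δ) (sn sn' : ℕ → Δ → ℕ)
    (α α' : ℕ → DMSAction S Var Δ) (σ σ' : ℕ → Var → Δ)
    (hI0 : I 0 = M.I0) (hI0' : I' 0 = M.I0)
    (hH0 : H 0 = ∅) (hH0' : H' 0 = ∅)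
    (hacts : ∀ i, α i ∈ M.acts) (hacts' : ∀ i, α' i ∈ M.acts)
    (hwf : ∀ i, AddVarsOK (α i) ∧ FreshInAdd (α i))
    (hstep : ∀ i, BStep S b (α i) (σ i) (I i) (H i) (sn i)
      (I (i + 1)) (H (i + 1)) (sn (i + 1)))
    (hstep' : ∀ i, BStep S b (α' i) (σ' i) (I' i) (H' i) (sn' i)
      (I' (i + 1)) (H' (i + 1)) (sn' (i + 1)))
    (habs₁ : ∀ i, α i = α' i)
    (habs₂ : ∀ i, ∀ u ∈ (α i).params,
      recIdx (adom S (I i)) (sn i) (σ i u) =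
      recIdx (adom S (I' i)) (sn' i) (σ' i u))
    -- `lam` is the bijection between the global active domains sending the
    -- value introduced by each fresh variable at each step of the first run to
    -- the value introduced by the same variable at the same step of the second
    (lam : Δ → Δ)
    (hlam : Set.BijOn lam (⋃ i, adom S (I i)) (⋃ i, adom S (I' i)))
    (hlamFresh : ∀ i, ∀ v ∈ (α i).fresh, lam (σ i v) = σ' i v) :
    ∃ β : ℕ → ℕ,
      (∀ i, ∀ e ∈ H i, β (sn i e) = sn' i (lam e)) ∧
      Set.BijOn β (⋃ i, sn i '' H i) (⋃ i, sn' i '' H' i) ∧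
      StrictMonoOn β (⋃ i, sn i '' H i) := by
  classical
  -- basic components of the steps
  have hHsucc : ∀ i, H (i + 1) = H i ∪ σ i '' freshSet (α i) :=
    fun i => ((hstep i).1).2.2.2.2.2
  have hHsucc' : ∀ i, H' (i + 1) = H' i ∪ σ' i '' freshSet (α' i) :=
    fun i => ((hstep' i).1).2.2.2.2.2
  have hIsucc : ∀ i, I (i + 1) = (I i \ substDB S (σ i) (α i).Del) ∪ substDB S (σ i) (α i).Add :=
    fun i => ((hstep i).1).2.2.2.2.1
  have hIsucc' : ∀ i, I' (i + 1) =
      (I' i \ substDB S (σ' i) (α' i).Del) ∪ substDB S (σ' i) (α' i).Add :=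
    fun i => ((hstep' i).1).2.2.2.2.1
  have hnotH : ∀ i, ∀ v ∈ (α i).fresh, σ i v ∉ H i := fun i => ((hstep i).1).2.1
  have hnotH' : ∀ i, ∀ v ∈ (α' i).fresh, σ' i v ∉ H' i := fun i => ((hstep' i).1).2.1
  have hstab : ∀ i, ∀ e ∈ H i, sn (i + 1) e = sn i e := fun i => (hstep i).2.2.2.1
  have hstab' : ∀ i, ∀ e ∈ H' i, sn' (i + 1) e = sn' i e := fun i => (hstep' i).2.2.2.1
  have hgt : ∀ i, ∀ v ∈ (α i).fresh, ∀ e ∈ H i, sn i e < sn (i + 1) (σ i v) :=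
    fun i => (hstep i).2.2.2.2.1
  have hgt' : ∀ i, ∀ v ∈ (α' i).fresh, ∀ e ∈ H' i, sn' i e < sn' (i + 1) (σ' i v) :=
    fun i => (hstep' i).2.2.2.2.1
  have hord : ∀ i, ∀ a b : Fin (α i).fresh.length, a < b →
      sn (i + 1) (σ i ((α i).fresh.get a)) < sn (i + 1) (σ i ((α i).fresh.get b)) :=
    fun i => (hstep i).2.2.2.2.2
  have hord' : ∀ i, ∀ a b : Fin (α' i).fresh.length, a < b →
      sn' (i + 1) (σ' i ((α' i).fresh.get a)) < sn' (i + 1) (σ' i ((α' i).fresh.get b)) :=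
    fun i => (hstep' i).2.2.2.2.2
  -- monotonicity of histories
  have hsub : ∀ i, H i ⊆ H (i + 1) := by
    intro i
    rw [hHsucc i]; exact Set.subset_union_left
  have hsub' : ∀ i, H' i ⊆ H' (i + 1) := by
    intro i
    rw [hHsucc' i]; exact Set.subset_union_left
  have hmono : ∀ i j, i ≤ j → H i ⊆ H j := by
    intro i j hij
    induction j, hij using Nat.le_induction with
    | base => exact le_refl _
    | succ j hij ih => exact ih.trans (hsub j)
  have hmono' : ∀ i j, i ≤ j → H' i ⊆ H' j := by
    intro i j hij
    induction j, hij using Nat.le_induction with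
    | base => exact le_refl _
    | succ j hij ih => exact ih.trans (hsub' j)
  -- stability of sequence numbers
  have hstabLe : ∀ i j, i ≤ j → ∀ e ∈ H i, sn j e = sn i e := by
    intro i j hij
    induction j, hij using Nat.le_induction with
    | base => intro e _; rfl
    | succ j hij ih =>
      intro e he
      rw [hstab j e (hmono i j hij he), ih e he]
  have hstabLe' : ∀ i j, i ≤ j → ∀ e ∈ H' i, sn' j e = sn' i e := by
    intro i j hij
    induction j, hij using Nat.le_induction with
    | base => intro e _; rfl
    | succ j hij ih =>
      intro e he
      rw [hstab' j e (hmono' i j hij he), ih e he]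
  -- injectivity of each numbering on each history
  have hinj : ∀ i, Set.InjOn (sn i) (H i) := by
    intro i
    cases i with
    | zero => rw [hH0]; exact fun e he => absurd he (Set.notMem_empty e)
    | succ j => exact (hstep j).2.2.1
  -- the main inductive invariant: lam maps H i onto H' i and strictly
  -- preserves the order of the sequence numbers
  have key : ∀ i, (∀ e ∈ H i, lam e ∈ H' i) ∧
      (∀ f ∈ H' i, ∃ e ∈ H i, lam e = f) ∧
      (∀ e ∈ H i, ∀ f ∈ H i, sn i e < sn i f → sn' i (lam e) < sn' i (lam f)) := by
    intro i
    induction i with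
    | zero =>
      refine ⟨?_, ?_, ?_⟩
      · intro e he; rw [hH0] at he; exact absurd he (Set.notMem_empty e)
      · intro f hf; rw [hH0'] at hf; exact absurd hf (Set.notMem_empty f)
      · intro e he; rw [hH0] at he; exact absurd he (Set.notMem_empty e)
    | succ i ih =>
      obtain ⟨ihM, ihS, ihO⟩ := ih
      have hfr : (α' i).fresh = (α i).fresh := by rw [habs₁ i]
      -- freshly introduced elements of the second run
      have hmapsNew : ∀ v ∈ (α i).fresh, lam (σ i v) ∈ H' (i + 1) := by
        intro v hv
        rw [hlamFresh i v hv, hHsucc' i]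
        refine Set.mem_union_right _ ⟨v, ?_, rfl⟩
        show v ∈ (α' i).fresh
        rw [hfr]; exact hv
      refine ⟨?_, ?_, ?_⟩
      · -- maps to
        intro e he
        rw [hHsucc i] at he
        rcases he with he | ⟨v, hv, rfl⟩
        · exact hsub' i (ihM e he)
        · exact hmapsNew v hv
      · -- surjectivity
        intro f hf
        rw [hHsucc' i] at hf
        rcases hf with hf | ⟨v, hv, rfl⟩
        · obtain ⟨e, he, hle⟩ := ihS f hf
          exact ⟨e, hsub i he, hle⟩
        · have hv' : v ∈ (α i).fresh := by rw [← hfr]; exact hv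
          refine ⟨σ i v, ?_, hlamFresh i v hv'⟩
          rw [hHsucc i]
          exact Set.mem_union_right _ ⟨v, hv', rfl⟩
      · -- order preservation
        intro e he f hf hlt
        rw [hHsucc i] at he hf
        rcases he with he | ⟨v, hv, rfl⟩
        · rcases hf with hf | ⟨w, hw, rfl⟩
          · -- both old
            have h1 := hstab i e he
            have h2 := hstab i f hf
            rw [h1, h2] at hlt
            have := ihO e he f hf hlt
            rw [hstab' i (lam e) (ihM e he), hstab' i (lam f) (ihM f hf)]
            exact this
          · -- e old, f new
            have hw' : w ∈ (α' i).fresh := by rw [hfr]; exact hw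
            rw [hlamFresh i w hw]
            have h1 : sn' (i + 1) (lam e) = sn' i (lam e) := hstab' i (lam e) (ihM e he)
            rw [h1]
            exact hgt' i w hw' (lam e) (ihM e he)
        · rcases hf with hf | ⟨w, hw, rfl⟩
          · -- e new, f old : contradiction
            exfalso
            have h2 : sn (i + 1) f = sn i f := hstab i f hf
            have := hgt i v hv f hf
            rw [h2] at hlt
            exact absurd hlt (not_lt_of_gt this)
          · -- both new
            obtain ⟨a, ha⟩ := List.get_of_mem hv
            obtain ⟨b, hb⟩ := List.get_of_mem hw
            rcases lt_trichotomy a b with hab | hab | hab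
            · have h := hord' i
              rw [← habs₁ i] at h
              have := h a b hab
              rw [ha, hb] at this
              rw [hlamFresh i v hv, hlamFresh i w hw]
              exact this
            · exfalso
              rw [hab, hb] at ha
              rw [ha] at hlt
              exact lt_irrefl _ hlt
            · exfalso
              have := hord i b a hab
              rw [ha, hb] at this
              exact absurd hlt (not_lt_of_gt this)
  -- every history element lies in the global active domain of its run
  have hcon : ∀ i j e f, e ∈ H i → f ∈ H j → sn i e = sn j f →
      sn' i (lam e) = sn' j (lam f) := by
    intro i j e f he hf heq
    have hik : i ≤ max i j := le_max_left i j
    have hjk : j ≤ max i j := le_max_right i j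
    have he' : e ∈ H (max i j) := hmono i _ hik he
    have hf' : f ∈ H (max i j) := hmono j _ hjk hf
    have : sn (max i j) e = sn (max i j) f := by
      rw [hstabLe i _ hik e he, hstabLe j _ hjk f hf]; exact heq
    have hef : e = f := hinj (max i j) he' hf' this
    subst hef
    rw [← hstabLe' i _ hik (lam e) ((key i).1 e he),
      ← hstabLe' j _ hjk (lam e) ((key j).1 e hf)]
  -- define β by cases
  let β : ℕ → ℕ := fun n =>
    if h : ∃ p : ℕ × Δ, p.2 ∈ H p.1 ∧ sn p.1 p.2 = n then
      sn' h.choose.1 (lam h.choose.2)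
    else 0
  have hβ : ∀ i, ∀ e ∈ H i, β (sn i e) = sn' i (lam e) := by
    intro i e he
    have h : ∃ p : ℕ × Δ, p.2 ∈ H p.1 ∧ sn p.1 p.2 = sn i e := ⟨(i, e), he, rfl⟩
    show dite _ _ _ = _
    rw [dif_pos h]
    exact hcon h.choose.1 i h.choose.2 e h.choose_spec.1 he h.choose_spec.2
  -- strict monotonicity
  have hsm : StrictMonoOn β (⋃ i, sn i '' H i) := by
    intro n hn m hm hnm
    simp only [Set.mem_iUnion, Set.mem_image] at hn hm
    obtain ⟨i, e, he, rfl⟩ := hn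
    obtain ⟨j, f, hf, rfl⟩ := hm
    have hik : i ≤ max i j := le_max_left i j
    have hjk : j ≤ max i j := le_max_right i j
    have he' : e ∈ H (max i j) := hmono i _ hik he
    have hf' : f ∈ H (max i j) := hmono j _ hjk hf
    have h1 : sn (max i j) e = sn i e := hstabLe i _ hik e he
    have h2 : sn (max i j) f = sn j f := hstabLe j _ hjk f hf
    have hlt : sn (max i j) e < sn (max i j) f := by rw [h1, h2]; exact hnm
    have := (key (max i j)).2.2 e he' f hf' hlt
    calc β (sn i e) = β (sn (max i j) e) := by rw [h1]
      _ = sn' (max i j) (lam e) := hβ _ e he'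
      _ < sn' (max i j) (lam f) := this
      _ = β (sn (max i j) f) := (hβ _ f hf').symm
      _ = β (sn j f) := by rw [h2]
  refine ⟨β, hβ, ⟨?_, hsm.injOn, ?_⟩, hsm⟩
  · -- maps to
    intro n hn
    simp only [Set.mem_iUnion, Set.mem_image] at hn ⊢
    obtain ⟨i, e, he, rfl⟩ := hn
    exact ⟨i, lam e, (key i).1 e he, (hβ i e he).symm⟩
  · -- surjectivity
    intro m hm
    simp only [Set.mem_iUnion, Set.mem_image] at hm
    obtain ⟨i, f, hf, rfl⟩ := hm
    obtain ⟨e, he, rfl⟩ := (key i).2.1 f hf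
    refine ⟨sn i e, ?_, hβ i e he⟩
    simp only [Set.mem_iUnion, Set.mem_image]
    exact ⟨i, e, he, rfl⟩
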